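/- For θ < 0, the function x ↦ α⁺ (1/x) e^{−λ⁺x}(e^x − 1)e^{θ(e^x−1)} is integrable on (0, ∞) for all λ⁺ > 0, α⁺ > 0, and the map G(θ) = ∫₀^∞ (1/x)e^{−λ⁺x}(e^x−1)e^{θ(e^x−1)} dx is continuous and strictly increasing on (−∞, 0) with G(θ) → 0 as θ → −∞; if λ⁺ ≤ 1 then G(θ) → +∞ as θ ↑ 0. -/

import Mathlib

open Real Set Filter MeasureTheory Topology Function ENNReal

noncomputable def Fj (lp θ x : ℝ) : ℝ :=
  (1 / x) * Real.exp (-lp * x) * (Real.exp x - 1) * Real.exp (θ * (Real.exp x - 1))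

lemma Fj_pos {lp θ x : ℝ} (hx : 0 < x) : 0 < Fj lp θ x := by
  have h1 : 0 < Real.exp x - 1 := by nlinarith [Real.add_one_le_exp x]
  have h2 := Real.exp_pos (-lp * x)
  have h3 := Real.exp_pos (θ * (Real.exp x - 1))
  have h4 : 0 < 1 / x := by positivity
  unfold Fj
  positivity

lemma Fj_mono {lp x : ℝ} (hx : 0 < x) {a b : ℝ} (hab : a ≤ b) :
    Fj lp a x ≤ Fj lp b x := by
  have h1 : 0 < Real.exp x - 1 := by nlinarith [Real.add_one_le_exp x]
  have h4 : 0 < 1 / x := by positivity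
  unfold Fj
  gcongr

lemma Fj_strictMono {lp x : ℝ} (hx : 0 < x) {a b : ℝ} (hab : a < b) :
    Fj lp a x < Fj lp b x := by
  have h1 : 0 < Real.exp x - 1 := by nlinarith [Real.add_one_le_exp x]
  have h4 : 0 < 1 / x := by positivity
  have h5 : Real.exp (a * (Real.exp x - 1)) < Real.exp (b * (Real.exp x - 1)) := by
    apply Real.exp_lt_exp.2
    exact mul_lt_mul_of_pos_right hab h1
  unfold Fj
  have hK : 0 < 1 / x * Real.exp (-lp * x) * (Real.exp x - 1) := by positivity
  exact mul_lt_mul_of_pos_left h5 hK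

lemma Fj_contOn (lp θ : ℝ) : ContinuousOn (fun x => Fj lp θ x) (Ioi 0) := by
  unfold Fj
  apply ContinuousOn.mul
  apply ContinuousOn.mul
  apply ContinuousOn.mul
  · exact continuousOn_const.div continuousOn_id (fun x hx => ne_of_gt hx)
  · exact (Real.continuous_exp.comp (continuous_const.mul continuous_id)).continuousOn
  · exact (Real.continuous_exp.sub continuous_const).continuousOn
  · exact (Real.continuous_exp.comp (continuous_const.mul
      (Real.continuous_exp.sub continuous_const))).continuousOn

lemma Fj_le_exp {lp θ x : ℝ} (hθ : θ ≤ 0) (hx : 0 < x) :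
    Fj lp θ x ≤ Real.exp ((1 - lp) * x) := by
  have ht : 0 ≤ Real.exp x - 1 := by nlinarith [Real.add_one_le_exp x]
  have h1 : (1 - x) * Real.exp x ≤ 1 := by
    have h := mul_le_mul_of_nonneg_right (Real.add_one_le_exp (-x)) (Real.exp_pos x).le
    rw [← Real.exp_add, neg_add_cancel, Real.exp_zero] at h
    nlinarith
  have h2 : (Real.exp x - 1) / x ≤ Real.exp x := by
    rw [div_le_iff₀ hx]
    nlinarith
  have h3 : Real.exp (θ * (Real.exp x - 1)) ≤ 1 := by
    calc Real.exp (θ * (Real.exp x - 1)) ≤ Real.exp 0 := Real.exp_le_exp.2 (by nlinarith)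
      _ = 1 := Real.exp_zero
  have h4 : 0 ≤ (Real.exp x - 1) / x := by positivity
  calc Fj lp θ x = ((Real.exp x - 1) / x) * Real.exp (-lp * x) *
        Real.exp (θ * (Real.exp x - 1)) := by unfold Fj; ring
    _ ≤ Real.exp x * Real.exp (-lp * x) * 1 := by
        gcongr
    _ = Real.exp ((1 - lp) * x) := by
        rw [mul_one, ← Real.exp_add]; ring_nf

lemma Fj_le_decay {lp θ x : ℝ} (hθ : θ < 0) (hx : 1 ≤ x) :
    Fj lp θ x ≤ (-1 / θ) * Real.exp (-lp * x) := by
  have hx0 : 0 < x := by linarith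
  have ht : 0 ≤ Real.exp x - 1 := by nlinarith [Real.add_one_le_exp x]
  set t := Real.exp x - 1 with htdef
  have h1 : (-θ) * t * Real.exp (θ * t) ≤ 1 := by
    have h2 := Real.add_one_le_exp (-(θ * t))
    have h3 := mul_le_mul_of_nonneg_right h2 (Real.exp_pos (θ * t)).le
    rw [← Real.exp_add, neg_add_cancel, Real.exp_zero] at h3
    nlinarith [Real.exp_pos (θ * t)]
  have hθ' : (0:ℝ) < -θ := by linarith
  have h4 : t * Real.exp (θ * t) ≤ -1 / θ := by
    rw [show (-1 / θ : ℝ) = 1 / (-θ) by rw [neg_div, div_neg]]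
    rw [le_div_iff₀ hθ']
    nlinarith
  calc Fj lp θ x = (1 / x) * Real.exp (-lp * x) * (t * Real.exp (θ * t)) := by
        unfold Fj; rw [← htdef]; ring
    _ ≤ 1 * Real.exp (-lp * x) * (-1 / θ) := by
        have hle : 1 / x ≤ 1 := by rw [div_le_one hx0]; linarith
        have hpos : 0 ≤ Real.exp (-lp * x) := (Real.exp_pos _).le
        gcongr
    _ = (-1 / θ) * Real.exp (-lp * x) := by ring

lemma Fj_aesm (lp θ : ℝ) {s : Set ℝ} (hs : MeasurableSet s) (hsub : s ⊆ Ioi 0) :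
    AEStronglyMeasurable (fun x => Fj lp θ x) (volume.restrict s) :=
  ((Fj_contOn lp θ).mono hsub).aestronglyMeasurable hs

lemma Fj_integrableOn {lp θ : ℝ} (hlp : 0 < lp) (hθ : θ < 0) :
    IntegrableOn (fun x => Fj lp θ x) (Ioi 0) := by
  have hsplit : Ioc (0:ℝ) 1 ∪ Ioi (1:ℝ) = Ioi 0 := Ioc_union_Ioi_eq_Ioi zero_le_one
  rw [← hsplit]
  apply IntegrableOn.union
  · -- on Ioc 0 1, bounded by a constant
    have hb : IntegrableOn (fun _ : ℝ => Real.exp |1 - lp|) (Ioc 0 1) :=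
      integrableOn_const measure_Ioc_lt_top.ne
    apply Integrable.mono' hb (Fj_aesm lp θ measurableSet_Ioc Ioc_subset_Ioi_self)
    rw [ae_restrict_iff' measurableSet_Ioc]
    apply ae_of_all
    intro x hx
    rw [Real.norm_eq_abs, abs_of_pos (Fj_pos hx.1)]
    calc Fj lp θ x ≤ Real.exp ((1 - lp) * x) := Fj_le_exp hθ.le hx.1
      _ ≤ Real.exp |1 - lp| := by
          apply Real.exp_le_exp.2
          nlinarith [le_abs_self (1 - lp), abs_nonneg (1 - lp), hx.1, hx.2]
  · -- on Ioi 1, exponential decay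
    have hb : IntegrableOn (fun x : ℝ => (-1 / θ) * Real.exp (-lp * x)) (Ioi 1) :=
      (exp_neg_integrableOn_Ioi 1 hlp).const_mul _
    apply Integrable.mono' hb (Fj_aesm lp θ measurableSet_Ioi
      (fun x hx => mem_Ioi.2 (lt_trans zero_lt_one (mem_Ioi.1 hx))))
    rw [ae_restrict_iff' measurableSet_Ioi]
    apply ae_of_all
    intro x hx
    rw [Real.norm_eq_abs, abs_of_pos (Fj_pos (lt_trans one_pos hx))]
    exact Fj_le_decay hθ (le_of_lt hx)

theorem memm_positive_jump_integral_properties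
    (ap lp : ℝ) (hap : 0 < ap) (hlp : 0 < lp)
    (G : ℝ → ℝ)
    (hG : ∀ θ, G θ = ∫ x in Ioi (0 : ℝ),
      (1 / x) * Real.exp (-lp * x) * (Real.exp x - 1) * Real.exp (θ * (Real.exp x - 1))) :
    (∀ θ < (0 : ℝ), IntegrableOn
        (fun x => ap * ((1 / x) * Real.exp (-lp * x) * (Real.exp x - 1) *
          Real.exp (θ * (Real.exp x - 1)))) (Ioi (0 : ℝ))) ∧
    ContinuousOn G (Iio (0 : ℝ)) ∧
    StrictMonoOn G (Iio (0 : ℝ)) ∧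
    Tendsto G atBot (nhds 0) ∧
    (lp ≤ 1 → Tendsto G (nhdsWithin 0 (Iio (0 : ℝ))) atTop) := by
  have hG' : ∀ θ, G θ = ∫ x in Ioi (0:ℝ), Fj lp θ x := hG
  refine ⟨?_, ?_, ?_, ?_, ?_⟩
  · -- integrability
    intro θ hθ
    exact (Fj_integrableOn hlp hθ).const_mul ap
  · -- continuity
    intro θ₀ hθ₀
    rw [mem_Iio] at hθ₀
    apply ContinuousAt.continuousWithinAt
    have hGfun : G = fun θ => ∫ x in Ioi (0:ℝ), Fj lp θ x := funext hG'
    rw [hGfun]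
    apply MeasureTheory.continuousAt_of_dominated
      (bound := fun x => Fj lp (θ₀ / 2) x)
    · exact Eventually.of_forall fun θ =>
        Fj_aesm lp θ measurableSet_Ioi subset_rfl
    · have hmem : Iio (θ₀ / 2) ∈ 𝓝 θ₀ := Iio_mem_nhds (by linarith)
      filter_upwards [hmem] with θ hθ
      rw [ae_restrict_iff' measurableSet_Ioi]
      apply ae_of_all
      intro x hx
      rw [Real.norm_eq_abs, abs_of_pos (Fj_pos hx)]
      exact Fj_mono hx (le_of_lt hθ)
    · exact Fj_integrableOn hlp (by linarith)
    · apply ae_of_all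
      intro x
      unfold Fj
      fun_prop
  · -- strict mono
    intro a ha b hb hab
    rw [mem_Iio] at ha hb
    have hia := Fj_integrableOn (θ := a) hlp ha
    have hib := Fj_integrableOn (θ := b) hlp hb
    have key : 0 < ∫ x in Ioi (0:ℝ), (Fj lp b x - Fj lp a x) := by
      rw [setIntegral_pos_iff_support_of_nonneg_ae]
      · have hsub : Ioi (0:ℝ) ⊆ support (fun x => Fj lp b x - Fj lp a x) :=
          fun x hx => ne_of_gt (sub_pos.2 (Fj_strictMono hx hab))
        calc (0:ENNReal) < volume (Ioi (0:ℝ)) := by simp [Real.volume_Ioi]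
          _ ≤ volume (support (fun x => Fj lp b x - Fj lp a x) ∩ Ioi 0) :=
              measure_mono (subset_inter hsub subset_rfl)
      · filter_upwards [ae_restrict_mem measurableSet_Ioi] with x hx
        exact sub_nonneg.2 (Fj_mono hx hab.le)
      · exact hib.sub hia
    rw [integral_sub hib hia] at key
    rw [hG' a, hG' b]
    linarith
  · -- tendsto atBot
    have hGfun : G = fun θ => ∫ x in Ioi (0:ℝ), Fj lp θ x := funext hG'
    rw [hGfun]
    have htend : Tendsto (fun θ => ∫ x in Ioi (0:ℝ), Fj lp θ x) atBot
        (𝓝 (∫ x in Ioi (0:ℝ), (0:ℝ))) := by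
      apply tendsto_integral_filter_of_dominated_convergence
        (bound := fun x => Fj lp (-1) x)
      · exact Eventually.of_forall fun θ =>
          Fj_aesm lp θ measurableSet_Ioi subset_rfl
      · filter_upwards [eventually_le_atBot (-1 : ℝ)] with θ hθ
        rw [ae_restrict_iff' measurableSet_Ioi]
        apply ae_of_all
        intro x hx
        rw [Real.norm_eq_abs, abs_of_pos (Fj_pos hx)]
        exact Fj_mono hx hθ
      · exact Fj_integrableOn hlp (by norm_num)
      · filter_upwards [ae_restrict_mem measurableSet_Ioi] with x hx
        have hx' : (0:ℝ) < x := hx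
        have ht : 0 < Real.exp x - 1 := by nlinarith [Real.add_one_le_exp x]
        have h1 : Tendsto (fun θ : ℝ => θ * (Real.exp x - 1)) atBot atBot :=
          tendsto_id.atBot_mul_const ht
        have h2 := Real.tendsto_exp_atBot.comp h1
        have h3 := h2.const_mul ((1 / x) * Real.exp (-lp * x) * (Real.exp x - 1))
        rw [mul_zero] at h3
        exact h3
    simpa using htend
  · -- tendsto atTop at 0 from the left
    intro hlp1
    rw [tendsto_atTop]
    intro M
    set R : ℝ := Real.exp (2 * |M| + 2) with hRdef
    have hR1 : (1:ℝ) ≤ R := by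
      rw [hRdef, ← Real.exp_zero]
      exact Real.exp_le_exp.2 (by positivity)
    have hlogR : Real.log R = 2 * |M| + 2 := Real.log_exp _
    have hIccsub : Icc (1:ℝ) R ⊆ Ioi 0 := fun x hx => lt_of_lt_of_le one_pos hx.1
    have hIocsub : Ioc (1:ℝ) R ⊆ Ioi 0 := fun x hx => lt_trans one_pos hx.1
    -- integrability of Fj lp 0 on Ioc 1 R
    have h0int : IntegrableOn (fun x => Fj lp 0 x) (Ioc 1 R) := by
      apply IntegrableOn.mono_set _ Ioc_subset_Icc_self
      exact ((Fj_contOn lp 0).mono hIccsub).integrableOn_Icc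
    have hinvint : IntegrableOn (fun x : ℝ => 1 / (2 * x)) (Ioc 1 R) := by
      apply IntegrableOn.mono_set _ Ioc_subset_Icc_self
      apply ContinuousOn.integrableOn_Icc
      exact continuousOn_const.div
        (continuous_const.mul continuous_id).continuousOn
        (fun x hx => by have := lt_of_lt_of_le one_pos hx.1; positivity)
    -- pointwise lower bound on Ioc 1 R
    have hlow : ∀ x ∈ Ioc (1:ℝ) R, 1 / (2 * x) ≤ Fj lp 0 x := by
      intro x hx
      have hx1 : (1:ℝ) ≤ x := hx.1.le
      have hx0 : (0:ℝ) < x := lt_trans one_pos hx.1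
      have hmul : Real.exp (-x) * Real.exp x = 1 := by
        rw [← Real.exp_add, neg_add_cancel, Real.exp_zero]
      have hexm : Real.exp (-x) ≤ 1 / 2 := by
        have h1 : Real.exp (-x) ≤ Real.exp (-1) := Real.exp_le_exp.2 (by linarith)
        have h2 : (2:ℝ) ≤ Real.exp 1 := by nlinarith [Real.add_one_le_exp 1]
        have h3 : Real.exp (-1) * Real.exp 1 = 1 := by
          rw [← Real.exp_add, neg_add_cancel, Real.exp_zero]
        nlinarith [Real.exp_pos (-1)]
      have hstep : Real.exp (-x) ≤ Real.exp (-lp * x) :=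
        Real.exp_le_exp.2 (by nlinarith)
      have hkey : 1 / 2 ≤ Real.exp (-lp * x) * (Real.exp x - 1) := by
        have : Real.exp (-x) * (Real.exp x - 1) = 1 - Real.exp (-x) := by
          rw [mul_sub, hmul, mul_one]
        have ht : 0 ≤ Real.exp x - 1 := by nlinarith [Real.add_one_le_exp x]
        nlinarith [mul_le_mul_of_nonneg_right hstep ht]
      calc 1 / (2 * x) = (1 / x) * (1 / 2) := by
            field_simp
          _ ≤ (1 / x) * (Real.exp (-lp * x) * (Real.exp x - 1)) := by
            gcongr
          _ = Fj lp 0 x := by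
            unfold Fj
            rw [zero_mul, Real.exp_zero]
            ring
    -- lower bound for the integral at θ = 0
    have hH0 : |M| + 1 ≤ ∫ x in Ioc (1:ℝ) R, Fj lp 0 x := by
      have hcalc : ∫ x in Ioc (1:ℝ) R, (1 / (2 * x)) = Real.log R / 2 := by
        rw [← intervalIntegral.integral_of_le hR1]
        have h0notin : (0:ℝ) ∉ Set.uIcc (1:ℝ) R := by
          rw [Set.uIcc_of_le hR1]
          intro h
          exact absurd h.1 (by norm_num)
        have : ∀ x : ℝ, 1 / (2 * x) = (1/2) * (1 / x) := by
          intro x; ring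
        simp_rw [this]
        rw [intervalIntegral.integral_const_mul, integral_one_div h0notin]
        rw [div_one]
        ring
      have hmono : ∫ x in Ioc (1:ℝ) R, (1 / (2 * x)) ≤ ∫ x in Ioc (1:ℝ) R, Fj lp 0 x :=
        setIntegral_mono_on hinvint h0int measurableSet_Ioc hlow
      rw [hcalc] at hmono
      rw [hlogR] at hmono
      linarith
    -- continuity in θ from the left at 0 of the truncated integral
    have hcont : Tendsto (fun θ => ∫ x in Ioc (1:ℝ) R, Fj lp θ x) (𝓝[<] (0:ℝ))
        (𝓝 (∫ x in Ioc (1:ℝ) R, Fj lp 0 x)) := by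
      apply tendsto_integral_filter_of_dominated_convergence
        (bound := fun x => Fj lp 0 x)
      · exact Eventually.of_forall fun θ =>
          Fj_aesm lp θ measurableSet_Ioc hIocsub
      · filter_upwards [self_mem_nhdsWithin] with θ hθ
        filter_upwards [ae_restrict_mem measurableSet_Ioc] with x hx
        rw [Real.norm_eq_abs, abs_of_pos (Fj_pos (hIocsub hx))]
        exact Fj_mono (hIocsub hx) (le_of_lt hθ)
      · exact h0int
      · filter_upwards [ae_restrict_mem measurableSet_Ioc] with x hx
        have hcx : Continuous (fun θ : ℝ => Fj lp θ x) := by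
          unfold Fj; fun_prop
        exact (hcx.tendsto 0).mono_left nhdsWithin_le_nhds
    have hMlt : M < ∫ x in Ioc (1:ℝ) R, Fj lp 0 x := by
      have : M < |M| + 1 := by cases abs_cases M <;> linarith
      linarith
    have hev : ∀ᶠ θ in 𝓝[<] (0:ℝ), M < ∫ x in Ioc (1:ℝ) R, Fj lp θ x :=
      hcont.eventually (eventually_gt_nhds hMlt)
    filter_upwards [hev, self_mem_nhdsWithin] with θ h1 h2
    have hθ0 : θ < 0 := h2
    have hint := Fj_integrableOn (θ := θ) hlp hθ0
    have hge : ∫ x in Ioc (1:ℝ) R, Fj lp θ x ≤ ∫ x in Ioi (0:ℝ), Fj lp θ x := by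
      apply setIntegral_mono_set hint
      · filter_upwards [ae_restrict_mem measurableSet_Ioi] with x hx
        exact (Fj_pos hx).le
      · exact HasSubset.Subset.eventuallyLE hIocsub
    rw [hG' θ]
    linarith
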